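/- arXiv:1506.07977 — 2 statements merged into one kernel-verified Lean document; each statement's English description precedes it below -/
import Mathlib

section
/- Domination of the percolation two-point function by the non-backtracking walk generating function: for every d ≥ 1, every p ∈ [0, 1/(2d−1)] and every x ∈ ℤ^d, τ_p(x) ≤ Σ_{n≥0} b_n(x)·p^n, the right-hand side taken in [0, ∞]. -/
open MeasureTheory Filter
open scoped ENNReal

namespace NoBLE

/-- Vertices of the hypercubic lattice `ℤ^d`. -/
abbrev Vertex (d : ℕ) := Fin d → ℤ

/-- The Euclidean norm `‖x‖₂` of a lattice point. -/
noncomputable def norm2 {d : ℕ} (x : Vertex d) : ℝ :=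
  Real.sqrt (∑ i, ((x i : ℝ)) ^ 2)

/-- The `ℓ¹`-norm `‖x‖₁` of a lattice point. -/
def norm1 {d : ℕ} (x : Vertex d) : ℤ := ∑ i, |x i|

/-- The standard unit vector `e_i`. -/
def basis {d : ℕ} (i : Fin d) : Vertex d := fun j => if j = i then 1 else 0

/-- Directions `ι ∈ {±1, …, ±d}`: `(i, true)` stands for `+e_i`, `(i, false)` for `−e_i`. -/
abbrev Dir (d : ℕ) := Fin d × Bool

/-- The unit vector `e_ι` attached to the direction `ι`. -/
def dirVec {d : ℕ} (ι : Dir d) : Vertex d := if ι.2 then basis ι.1 else -basis ι.1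

/-- The opposite direction `−ι`. -/
def dirNeg {d : ℕ} (ι : Dir d) : Dir d := (ι.1, !ι.2)

/-- Nearest-neighbour bonds of `ℤ^d`: the pair `(x, i)` encodes the undirected bond
`{x, x + e_i}`; every nearest-neighbour bond has a unique such representation. -/
abbrev Bond (d : ℕ) := Vertex d × Fin d

/-- Bond configurations: each bond is either occupied (`true`) or vacant (`false`). -/
abbrev Config (d : ℕ) := Bond d → Bool

noncomputable instance (d : ℕ) : Encodable (Bond d) := Encodable.ofCountable _

/-- The undirected nearest-neighbour bond `{x, y}` is occupied in the configuration `ω`. -/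
def Occ {d : ℕ} (ω : Config d) (x y : Vertex d) : Prop :=
  (∃ i, y = x + basis i ∧ ω (x, i) = true) ∨ (∃ i, x = y + basis i ∧ ω (y, i) = true)

/-- `x ↔ y`: `x` and `y` are joined by a path of occupied bonds (in particular `x ↔ x`). -/
def Conn {d : ℕ} (ω : Config d) (x y : Vertex d) : Prop :=
  Relation.ReflTransGen (Occ ω) x y

/-- Splitting a uniform-`[0,1)` random variable into an i.i.d. sequence of Bernoulli(`p`)
bits: `bit p n u` is the `n`-th bit. -/
noncomputable def bit (p : ℝ) : ℕ → ℝ → Bool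
  | 0 => fun u => if u < p then true else false
  | n + 1 => fun u => bit p n (if u < p then u / p else (u - p) / (1 - p))

/-- The Bernoulli(`p`) bond-percolation measure `ℙ_p` on `Config d`, i.e. the product over
all bonds of Bernoulli(`p`) measures on `{occupied, vacant}`; it is realised as the joint
law of the i.i.d. Bernoulli(`p`) family `(bit p (encode b))_{b : Bond d}` driven by a
uniform random variable on `[0,1)`. -/
noncomputable def percMeasure (d : ℕ) (p : ℝ) : Measure (Config d) :=
  Measure.map (fun u => fun b : Bond d => bit p (Encodable.encode b) u)
    (volume.restrict (Set.Ico (0 : ℝ) 1))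

/-- The two-point function `τ_p(x) = ℙ_p(0 ↔ x)`, as an extended real number. -/
noncomputable def tauE (d : ℕ) (p : ℝ) (x : Vertex d) : ℝ≥0∞ :=
  percMeasure d p {ω | Conn ω 0 x}

/-- The two-point function `τ_p(x) = ℙ_p(0 ↔ x)`, as a real number. -/
noncomputable def tau (d : ℕ) (p : ℝ) (x : Vertex d) : ℝ := (tauE d p x).toReal

/-- The susceptibility `χ(p) = Σ_{x ∈ ℤ^d} τ_p(x) ∈ [0, ∞]`. -/
noncomputable def chi (d : ℕ) (p : ℝ) : ℝ≥0∞ := ∑' x : Vertex d, tauE d p x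

/-- The critical point `p_c(d) = sup { p ∈ [0,1] : χ(p) < ∞ }`. -/
noncomputable def pc (d : ℕ) : ℝ := sSup {p : ℝ | p ∈ Set.Icc (0 : ℝ) 1 ∧ chi d p < ⊤}


/-- The non-backtracking condition for a sequence of steps: no step is immediately
followed by the reversed step. -/
def IsNB {d n : ℕ} (s : Fin n → Dir d) : Prop :=
  ∀ (i : ℕ) (h : i + 1 < n), s ⟨i + 1, h⟩ ≠ dirNeg (s ⟨i, Nat.lt_of_succ_lt h⟩)

/-- `b_n(x)`: the number of `n`-step non-backtracking nearest-neighbour walks from `0`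
to `x`, encoded by their sequences of steps. -/
noncomputable def nbw (d n : ℕ) (x : Vertex d) : ℕ :=
  Nat.card {s : Fin n → Dir d // IsNB s ∧ (∑ i, dirVec (s i)) = x}

/-- `b^ι_n(x)`: as `nbw d n x`, with the additional requirement that the first position
`ω₁` of the walk is not `e_ι`. -/
noncomputable def nbwA (d n : ℕ) (ι : Dir d) (x : Vertex d) : ℕ :=
  Nat.card {s : Fin n → Dir d //
    IsNB s ∧ (∀ h : 0 < n, s ⟨0, h⟩ ≠ ι) ∧ (∑ i, dirVec (s i)) = x}

/-! ### Auxiliary development -/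

section Aux

variable {d : ℕ}

lemma dirVec_dirNeg (ι : Dir d) : dirVec (dirNeg ι) = -dirVec ι := by
  obtain ⟨i, b⟩ := ι; cases b <;> simp [dirNeg, dirVec]

/-- The bond used when stepping from `v` in direction `ι`. -/
def bondOf (v : Vertex d) (ι : Dir d) : Bond d :=
  if ι.2 then (v, ι.1) else (v + dirVec ι, ι.1)

lemma bondOf_fst (a : Vertex d) (ι : Dir d) :
    a = (bondOf a ι).1 ∨ a = (bondOf a ι).1 + basis (bondOf a ι).2 := by
  obtain ⟨i, b⟩ := ι
  cases b with
  | true => left; rfl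
  | false =>
      right
      show a = a + dirVec ((i, false) : Dir d) + basis i
      have : dirVec ((i, false) : Dir d) = -basis i := by simp [dirVec]
      rw [this, neg_add_cancel_right]

lemma bondOf_fst' (b : Vertex d) (κ : Dir d) :
    (bondOf b κ).1 = b ∨ (bondOf b κ).1 = b + dirVec κ := by
  obtain ⟨i, c⟩ := κ
  cases c with
  | true => left; rfl
  | false => right; rfl

lemma bondOf_snd' (b : Vertex d) (κ : Dir d) :
    (bondOf b κ).1 + basis (bondOf b κ).2 = b ∨
      (bondOf b κ).1 + basis (bondOf b κ).2 = b + dirVec κ := by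
  obtain ⟨i, c⟩ := κ
  cases c with
  | true =>
      right
      show b + basis i = b + dirVec ((i, true) : Dir d)
      simp [dirVec]
  | false =>
      left
      show b + dirVec ((i, false) : Dir d) + basis i = b
      have : dirVec ((i, false) : Dir d) = -basis i := by simp [dirVec]
      rw [this, neg_add_cancel_right]

lemma bondOf_eq {a b : Vertex d} {ι κ : Dir d} (h : bondOf a ι = bondOf b κ) :
    a = b ∨ a = b + dirVec κ := by
  rcases bondOf_fst a ι with h1 | h1 <;> rw [h] at h1
  · rcases bondOf_fst' b κ with h2 | h2
    · left; rw [h1, h2]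
    · right; rw [h1, h2]
  · rcases bondOf_snd' b κ with h2 | h2
    · left; rw [h1, h2]
    · right; rw [h1, h2]

/-- `Walk ω v l w` : following the steps `l` from `v` gives an occupied path ending at `w`. -/
def Walk (ω : Config d) : Vertex d → List (Dir d) → Vertex d → Prop
  | v, [], w => v = w
  | v, ι :: l, w => ω (bondOf v ι) = true ∧ Walk ω (v + dirVec ι) l w

/-- The list of positions visited by a walk. -/
def posns (v : Vertex d) : List (Dir d) → List (Vertex d)
  | [] => [v]
  | ι :: l => v :: posns (v + dirVec ι) l

/-- The list of bonds used by a walk. -/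
def bondsOf (v : Vertex d) : List (Dir d) → List (Bond d)
  | [] => []
  | ι :: l => bondOf v ι :: bondsOf (v + dirVec ι) l

lemma start_mem_posns (v : Vertex d) (l : List (Dir d)) : v ∈ posns v l := by
  cases l <;> simp [posns]

lemma occ_step {ω : Config d} {a b : Vertex d} (h : Occ ω a b) :
    ∃ ι : Dir d, b = a + dirVec ι ∧ ω (bondOf a ι) = true := by
  rcases h with ⟨i, hb, hocc⟩ | ⟨i, hb, hocc⟩
  · exact ⟨(i, true), by simpa [dirVec] using hb, by simpa [bondOf] using hocc⟩
  · refine ⟨(i, false), ?_, ?_⟩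
    · rw [hb]; simp [dirVec]
    · have : a + dirVec ((i, false) : Dir d) = b := by
        rw [hb]; simp [dirVec]
      simpa [bondOf, this] using hocc

lemma walk_append {ω : Config d} :
    ∀ (l : List (Dir d)) (v w u : Vertex d), Walk ω v l w → Walk ω w l' u →
      Walk ω v (l ++ l') u := by
  intro l
  induction l with
  | nil => intro v w u h1 h2; cases h1; simpa using h2
  | cons ι t ih =>
      intro v w u h1 h2
      exact ⟨h1.1, ih _ _ _ h1.2 h2⟩

lemma conn_walk {ω : Config d} {x : Vertex d} (h : Conn ω 0 x) :
    ∃ l, Walk ω 0 l x := by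
  induction h with
  | refl => exact ⟨[], rfl⟩
  | tail _ hocc ih =>
      obtain ⟨l, hl⟩ := ih
      obtain ⟨ι, hb, hocc'⟩ := occ_step hocc
      exact ⟨l ++ [ι], walk_append _ _ _ _ hl ⟨hocc', hb.symm⟩⟩

lemma walk_sum {ω : Config d} :
    ∀ (l : List (Dir d)) (v w : Vertex d), Walk ω v l w → v + (l.map dirVec).sum = w := by
  intro l
  induction l with
  | nil => intro v w h; cases h; simp
  | cons ι t ih =>
      intro v w h
      have := ih _ _ h.2
      rw [← this]; simp; abel

lemma walk_occ {ω : Config d} :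
    ∀ (l : List (Dir d)) (v w : Vertex d), Walk ω v l w →
      ∀ b ∈ bondsOf v l, ω b = true := by
  intro l
  induction l with
  | nil => intro v w _ b hb; simp [bondsOf] at hb
  | cons ι t ih =>
      intro v w h b hb
      rcases List.mem_cons.mp hb with rfl | hb
      · exact h.1
      · exact ih _ _ h.2 b hb

lemma walk_of_mem_posns {ω : Config d} {v : Vertex d} :
    ∀ (l : List (Dir d)) (u w : Vertex d), Walk ω u l w → v ∈ posns u l →
      ∃ l₂, Walk ω v l₂ w ∧ (posns v l₂).Sublist (posns u l) := by
  intro l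
  induction l with
  | nil =>
      intro u w h hv
      simp [posns] at hv; subst hv
      exact ⟨[], h, List.Sublist.refl _⟩
  | cons ι t ih =>
      intro u w h hv
      rcases List.mem_cons.mp hv with rfl | hv
      · exact ⟨ι :: t, h, List.Sublist.refl _⟩
      · obtain ⟨l₂, h1, h2⟩ := ih _ _ h.2 hv
        exact ⟨l₂, h1, h2.trans (List.sublist_cons_self _ _)⟩

lemma walk_prune {ω : Config d} :
    ∀ (l : List (Dir d)) (v w : Vertex d), Walk ω v l w →
      ∃ l', Walk ω v l' w ∧ (posns v l').Nodup := by
  intro l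
  induction l with
  | nil => intro v w h; exact ⟨[], h, by simp [posns]⟩
  | cons ι t ih =>
      intro v w h
      obtain ⟨t', ht', hnd⟩ := ih _ _ h.2
      by_cases hv : v ∈ posns (v + dirVec ι) t'
      · obtain ⟨l₂, h1, h2⟩ := walk_of_mem_posns _ _ _ ht' hv
        exact ⟨l₂, h1, hnd.sublist h2⟩
      · exact ⟨ι :: t', ⟨h.1, ht'⟩, by simp [posns, List.nodup_cons, hv, hnd]⟩

lemma nbl_of_nodup :
    ∀ (l : List (Dir d)) (v : Vertex d), (posns v l).Nodup →
      l.Chain' (fun a b => b ≠ dirNeg a) := by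
  intro l
  induction l with
  | nil => intro v _; exact List.isChain_nil
  | cons ι t ih =>
      intro v hnd
      rw [posns, List.nodup_cons] at hnd
      cases t with
      | nil => exact List.isChain_singleton _
      | cons κ t' =>
          refine List.isChain_cons_cons.mpr ⟨?_, ih _ hnd.2⟩
          intro hκ
          apply hnd.1
          have : v + dirVec ι + dirVec κ ∈ posns (v + dirVec ι) (κ :: t') := by
            rw [posns]; exact List.mem_cons_of_mem _ (start_mem_posns _ _)
          have hv : v + dirVec ι + dirVec κ = v := by
            rw [hκ, dirVec_dirNeg, add_neg_cancel_right]
          rwa [hv] at this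

lemma mem_bondsOf {b : Bond d} :
    ∀ (l : List (Dir d)) (u : Vertex d), b ∈ bondsOf u l →
      ∃ a κ, b = bondOf a κ ∧ a ∈ posns u l ∧ a + dirVec κ ∈ posns u l := by
  intro l
  induction l with
  | nil => intro u hb; simp [bondsOf] at hb
  | cons ι t ih =>
      intro u hb
      rcases List.mem_cons.mp hb with rfl | hb
      · exact ⟨u, ι, rfl, start_mem_posns _ _,
          List.mem_cons_of_mem _ (start_mem_posns _ _)⟩
      · obtain ⟨a, κ, h1, h2, h3⟩ := ih _ hb
        exact ⟨a, κ, h1, List.mem_cons_of_mem _ h2, List.mem_cons_of_mem _ h3⟩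

lemma bondsOf_nodup :
    ∀ (l : List (Dir d)) (v : Vertex d), (posns v l).Nodup → (bondsOf v l).Nodup := by
  intro l
  induction l with
  | nil => intro v _; simp [bondsOf]
  | cons ι t ih =>
      intro v hnd
      rw [posns, List.nodup_cons] at hnd
      rw [bondsOf, List.nodup_cons]
      refine ⟨?_, ih _ hnd.2⟩
      intro hmem
      obtain ⟨a, κ, h1, h2, h3⟩ := mem_bondsOf _ _ hmem
      rcases bondOf_eq h1 with rfl | rfl
      · exact hnd.1 h2
      · exact hnd.1 h3

lemma bondsOf_length : ∀ (l : List (Dir d)) (v : Vertex d), (bondsOf v l).length = l.length := by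
  intro l
  induction l with
  | nil => intro v; rfl
  | cons ι t ih => intro v; simp [bondsOf, ih]

lemma sum_get (l : List (Dir d)) :
    (∑ i : Fin l.length, dirVec (l.get i)) = (l.map dirVec).sum := by
  conv_rhs => rw [← List.ofFn_get l]
  rw [List.map_ofFn, List.sum_ofFn]
  rfl

end Aux
section Meas

lemma measurable_bit (p : ℝ) : ∀ n, Measurable (bit p n)
  | 0 => by
      show Measurable fun u => if u < p then true else false
      exact Measurable.ite measurableSet_Iio measurable_const measurable_const
  | n + 1 => by
      show Measurable fun u => bit p n (if u < p then u / p else (u - p) / (1 - p))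
      exact (measurable_bit p n).comp
        (Measurable.ite measurableSet_Iio (measurable_id.div_const p)
          ((measurable_id.sub_const p).div_const (1 - p)))

/-- The event that a given finite set of bits are all equal to `true`. -/
def bitSet (p : ℝ) (S : Finset ℕ) : Set ℝ :=
  Set.Ico (0 : ℝ) 1 ∩ {u | ∀ k ∈ S, bit p k u = true}

lemma measurableSet_bitCond (p : ℝ) (S : Finset ℕ) :
    MeasurableSet {u : ℝ | ∀ k ∈ S, bit p k u = true} := by
  have : {u : ℝ | ∀ k ∈ S, bit p k u = true} = ⋂ k ∈ S, (bit p k) ⁻¹' {true} := by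
    ext u; simp
  rw [this]
  exact MeasurableSet.biInter S.countable_toSet fun k _ =>
    (measurable_bit p k) (measurableSet_singleton true)

lemma bit_succ_lt {p u : ℝ} (n : ℕ) (h : u < p) :
    bit p (n + 1) u = bit p n (u / p) := by
  simp only [bit, if_pos h]

lemma bit_succ_ge {p u : ℝ} (n : ℕ) (h : ¬u < p) :
    bit p (n + 1) u = bit p n ((u - p) / (1 - p)) := by
  simp only [bit, if_neg h]

lemma volume_bitSet {p : ℝ} (hp0 : 0 ≤ p) (hp1 : p ≤ 1) :
    ∀ (N : ℕ) (S : Finset ℕ), S ⊆ Finset.range N →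
      volume (bitSet p S) = ENNReal.ofReal p ^ S.card := by
  intro N
  induction N with
  | zero =>
      intro S hS
      have hSe : S = ∅ := Finset.subset_empty.mp (by simpa using hS)
      subst hSe
      simp [bitSet, Real.volume_Ico]
  | succ N ih =>
      intro S hS
      classical
      set S' : Finset ℕ := S.preimage Nat.succ (Nat.succ_injective.injOn) with hS'def
      have hmem' : ∀ k, k ∈ S' ↔ k + 1 ∈ S := fun k => Finset.mem_preimage
      have hS'sub : S' ⊆ Finset.range N := by
        intro k hk
        have := hS ((hmem' k).mp hk)
        simp only [Finset.mem_range] at this ⊢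
        omega
      have hvol' := ih S' hS'sub
      have hCsub : bitSet p S' ⊆ Set.Ico (0 : ℝ) 1 := Set.inter_subset_left
      -- Part below `p`
      have hm1 : volume (bitSet p S ∩ Set.Iio p)
          = ENNReal.ofReal p * volume (bitSet p S') := by
        rcases eq_or_lt_of_le hp0 with h0 | h0
        · have he : bitSet p S ∩ Set.Iio p = ∅ := by
            ext u
            simp only [bitSet, Set.mem_inter_iff, Set.mem_Ico, Set.mem_Iio, Set.mem_setOf_eq,
              Set.mem_empty_iff_false, iff_false, not_and]
            intro h hu
            exact absurd hu (by rw [← h0]; exact not_lt.mpr h.1.1)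
          rw [he, ← h0]
          simp
        · have hset : bitSet p S ∩ Set.Iio p = (p⁻¹ • ·) ⁻¹' bitSet p S' := by
            ext u
            simp only [bitSet, Set.mem_inter_iff, Set.mem_Ico, Set.mem_Iio, Set.mem_setOf_eq,
              Set.mem_preimage, smul_eq_mul]
            constructor
            · rintro ⟨⟨⟨hu0, _⟩, hbits⟩, hup⟩
              have hdiv : p⁻¹ * u = u / p := by ring
              refine ⟨⟨?_, ?_⟩, ?_⟩
              · rw [hdiv]; exact div_nonneg hu0 hp0
              · rw [hdiv]; exact (div_lt_one h0).mpr hup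
              · intro j hj
                have : bit p (j + 1) u = true := hbits _ ((hmem' j).mp hj)
                rw [bit_succ_lt j hup] at this
                rw [hdiv]; exact this
            · rintro ⟨⟨hu0, hu1⟩, hbits⟩
              have hdiv : p⁻¹ * u = u / p := by ring
              rw [hdiv] at hu0 hu1 hbits
              have hup : u < p := (div_lt_one h0).mp hu1
              have hu0' : 0 ≤ u := by
                rcases div_nonneg_iff.mp hu0 with ⟨h, _⟩ | ⟨_, h⟩
                · exact h
                · linarith
              refine ⟨⟨⟨hu0', lt_of_lt_of_le hup hp1⟩, ?_⟩, hup⟩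
              intro k hk
              cases k with
              | zero => simp [bit, if_pos hup]
              | succ j =>
                  rw [bit_succ_lt j hup]
                  exact hbits j ((hmem' j).mpr hk)
          rw [hset, MeasureTheory.Measure.addHaar_preimage_smul volume
            (inv_ne_zero (ne_of_gt h0))]
          congr 1
          rw [Module.finrank_self, pow_one, inv_inv, abs_of_nonneg hp0]
      -- Part above `p`
      have hm2 : volume (bitSet p S ∩ Set.Ici p)
          = (if 0 ∈ S then 0 else ENNReal.ofReal (1 - p) * volume (bitSet p S')) := by
        by_cases h0S : 0 ∈ S
        · simp only [h0S, if_pos]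
          have he : bitSet p S ∩ Set.Ici p = ∅ := by
            ext u
            simp only [bitSet, Set.mem_inter_iff, Set.mem_Ico, Set.mem_Iio, Set.mem_setOf_eq,
              Set.mem_empty_iff_false, iff_false, not_and, Set.mem_Ici]
            intro h hup
            have := h.2 0 h0S
            rw [show bit p 0 u = false by simp [bit, not_lt.mpr hup]] at this
            exact Bool.false_ne_true this
          rw [he]; simp
        · simp only [h0S, if_neg, if_false]
          rcases lt_or_eq_of_le hp1 with h1 | h1
          · have hset : bitSet p S ∩ Set.Ici p
                = (fun u => u + -p) ⁻¹' (((1 - p)⁻¹ • ·) ⁻¹' bitSet p S') := by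
              ext u
              simp only [bitSet, Set.mem_inter_iff, Set.mem_Ico, Set.mem_Ici, Set.mem_setOf_eq,
                Set.mem_preimage, smul_eq_mul]
              have hdiv : (1 - p)⁻¹ * (u + -p) = (u - p) / (1 - p) := by ring
              have h1p : (0 : ℝ) < 1 - p := by linarith
              constructor
              · rintro ⟨⟨⟨hu0, hu1⟩, hbits⟩, hup⟩
                rw [hdiv]
                refine ⟨⟨div_nonneg (by linarith) (le_of_lt h1p), ?_⟩, ?_⟩
                · rw [div_lt_one h1p]; linarith
                · intro j hj
                  have : bit p (j + 1) u = true := hbits _ ((hmem' j).mp hj)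
                  rw [bit_succ_ge j (not_lt.mpr hup)] at this
                  exact this
              · rintro ⟨⟨hv0, hv1⟩, hbits⟩
                rw [hdiv] at hv0 hv1 hbits
                have hup : p ≤ u := by
                  rcases div_nonneg_iff.mp hv0 with ⟨h, _⟩ | ⟨_, h⟩
                  · linarith
                  · linarith
                have hu1 : u < 1 := by
                  rw [div_lt_one h1p] at hv1; linarith
                refine ⟨⟨⟨by linarith, hu1⟩, ?_⟩, hup⟩
                intro k hk
                cases k with
                | zero => exact absurd hk h0S
                | succ j =>
                    rw [bit_succ_ge j (not_lt.mpr hup)]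
                    exact hbits j ((hmem' j).mpr hk)
            rw [hset, measure_preimage_add_right,
              MeasureTheory.Measure.addHaar_preimage_smul volume
                (inv_ne_zero (ne_of_gt (by linarith : (0:ℝ) < 1 - p)))]
            congr 1
            rw [Module.finrank_self, pow_one, inv_inv, abs_of_nonneg (by linarith : (0:ℝ) ≤ 1 - p)]
          · have he : bitSet p S ∩ Set.Ici p = ∅ := by
              ext u
              simp only [bitSet, Set.mem_inter_iff, Set.mem_Ico, Set.mem_Ici, Set.mem_setOf_eq,
                Set.mem_empty_iff_false, iff_false, not_and]
              intro h hup
              rw [h1] at hup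
              linarith [h.1.2]
            rw [he, ← h1]
            simp
      -- splitting
      have hsplit : volume (bitSet p S)
          = volume (bitSet p S ∩ Set.Iio p) + volume (bitSet p S ∩ Set.Ici p) := by
        have h := measure_inter_add_diff (μ := volume) (bitSet p S)
          (measurableSet_Iio (a := p))
        rw [Set.diff_eq, Set.compl_Iio] at h
        exact h.symm
      by_cases h0S : 0 ∈ S
      · have hcard : S.card = S'.card + 1 := by
          have hrepr : S = insert 0 (S'.image Nat.succ) := by
            ext k
            cases k with
            | zero => simp [h0S]
            | succ j =>
                constructor
                · intro h
                  exact Finset.mem_insert_of_mem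
                    (Finset.mem_image.mpr ⟨j, (hmem' j).mpr h, rfl⟩)
                · intro h
                  rcases Finset.mem_insert.mp h with h | h
                  · exact absurd h (Nat.succ_ne_zero j)
                  · obtain ⟨a, ha, hak⟩ := Finset.mem_image.mp h
                    have : a = j := Nat.succ_injective hak
                    subst this
                    exact (hmem' a).mp ha
          rw [hrepr, Finset.card_insert_of_notMem (by simp),
            Finset.card_image_of_injective _ Nat.succ_injective]
        rw [hsplit, hm1, hm2, if_pos h0S, add_zero, hvol', hcard, pow_succ]
        ring
      · have hcard : S.card = S'.card := by
          have hrepr : S = S'.image Nat.succ := by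
            ext k
            cases k with
            | zero => simp [h0S]
            | succ j =>
                constructor
                · intro h
                  exact Finset.mem_image.mpr ⟨j, (hmem' j).mpr h, rfl⟩
                · intro h
                  obtain ⟨a, ha, hak⟩ := Finset.mem_image.mp h
                  have : a = j := Nat.succ_injective hak
                  subst this
                  exact (hmem' a).mp ha
          rw [hrepr, Finset.card_image_of_injective _ Nat.succ_injective]
        rw [hsplit, hm1, hm2, if_neg h0S, hvol', ← add_mul,
          ← ENNReal.ofReal_add hp0 (by linarith : (0:ℝ) ≤ 1 - p)]
        rw [show p + (1 - p) = 1 by ring, ENNReal.ofReal_one, one_mul, hcard]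

lemma perc_cyl (d : ℕ) {p : ℝ} (hp0 : 0 ≤ p) (hp1 : p ≤ 1) (bl : List (Bond d))
    (hnd : bl.Nodup) :
    percMeasure d p {ω : Config d | ∀ b ∈ bl, ω b = true}
      = ENNReal.ofReal p ^ bl.length := by
  classical
  have hf : Measurable (fun u : ℝ => fun b : Bond d => bit p (Encodable.encode b) u) :=
    measurable_pi_lambda _ fun b => measurable_bit p _
  have hms : MeasurableSet {ω : Config d | ∀ b ∈ bl, ω b = true} := by
    have : {ω : Config d | ∀ b ∈ bl, ω b = true}
        = ⋂ b ∈ bl.toFinset, (fun ω : Config d => ω b) ⁻¹' {true} := by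
      ext ω
      simp only [Set.mem_setOf_eq, Set.mem_iInter, Set.mem_preimage,
        Set.mem_singleton_iff, List.mem_toFinset]
    rw [this]
    exact MeasurableSet.biInter bl.toFinset.countable_toSet fun b _ =>
      (measurable_pi_apply b) (measurableSet_singleton true)
  rw [percMeasure, Measure.map_apply hf hms]
  set S : Finset ℕ := bl.toFinset.image Encodable.encode with hS
  have hpre : (fun u : ℝ => fun b : Bond d => bit p (Encodable.encode b) u) ⁻¹'
      {ω : Config d | ∀ b ∈ bl, ω b = true} = {u | ∀ k ∈ S, bit p k u = true} := by
    ext u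
    simp only [Set.mem_preimage, Set.mem_setOf_eq, hS, Finset.mem_image, List.mem_toFinset]
    constructor
    · intro h k hk
      obtain ⟨b, hb, rfl⟩ := hk
      exact h b hb
    · intro h b hb
      exact h _ ⟨b, hb, rfl⟩
  rw [hpre, Measure.restrict_apply (measurableSet_bitCond p S), Set.inter_comm]
  have hbit : volume (bitSet p S) = ENNReal.ofReal p ^ S.card :=
    volume_bitSet hp0 hp1 (S.sup id + 1) S
      (fun k hk => Finset.mem_range.mpr (Nat.lt_succ_of_le (Finset.le_sup (f := id) hk)))
  rw [show Set.Ico (0:ℝ) 1 ∩ {u | ∀ k ∈ S, bit p k u = true} = bitSet p S from rfl, hbit]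
  congr 1
  rw [hS, Finset.card_image_of_injective _ Encodable.encode_injective,
    List.toFinset_card_of_nodup hnd]

end Meas
section Final

variable {d : ℕ}

/-- Non-backtracking step sequences from `0` to `x` using pairwise distinct bonds. -/
def GoodT (d n : ℕ) (x : Vertex d) : Type :=
  {s : Fin n → Dir d //
    IsNB s ∧ (∑ i, dirVec (s i)) = x ∧ (bondsOf (0 : Vertex d) (List.ofFn s)).Nodup}

instance (d n : ℕ) (x : Vertex d) : Finite (GoodT d n x) :=
  Subtype.finite

/-- The cylinder event attached to a good step sequence. -/
def cylOf {x : Vertex d} (q : Σ n, GoodT d n x) : Set (Config d) :=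
  {ω | ∀ b ∈ bondsOf (0 : Vertex d) (List.ofFn q.2.1), ω b = true}

lemma conn_subset_cyl (x : Vertex d) :
    {ω : Config d | Conn ω 0 x} ⊆ ⋃ q : Σ n, GoodT d n x, cylOf q := by
  intro ω hω
  obtain ⟨l, hl⟩ := conn_walk hω
  obtain ⟨l', hw, hnd⟩ := walk_prune _ _ _ hl
  have hnb : IsNB l'.get := by
    have hch := nbl_of_nodup l' 0 hnd
    rw [List.Chain', List.isChain_iff_getElem] at hch
    intro i h
    exact hch i (by omega)
  have hsum : (∑ i : Fin l'.length, dirVec (l'.get i)) = x := by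
    have h := walk_sum _ _ _ hw
    rw [sum_get]
    rw [← h, zero_add]
  have hofn : List.ofFn l'.get = l' := List.ofFn_get l'
  have hbnd : (bondsOf (0 : Vertex d) (List.ofFn l'.get)).Nodup := by
    rw [hofn]; exact bondsOf_nodup _ _ hnd
  refine Set.mem_iUnion.mpr ⟨⟨l'.length, ⟨l'.get, hnb, hsum, hbnd⟩⟩, ?_⟩
  intro b hb
  rw [show (⟨l'.length, ⟨l'.get, hnb, hsum, hbnd⟩⟩ : Σ n, GoodT d n x).2.1 = l'.get from rfl,
    hofn] at hb
  exact walk_occ _ _ _ hw b hb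

lemma card_goodT_le (d n : ℕ) (x : Vertex d) : Nat.card (GoodT d n x) ≤ nbw d n x := by
  rw [nbw]
  exact Nat.card_le_card_of_injective
    (fun s : GoodT d n x => (⟨s.1, s.2.1, s.2.2.1⟩ :
      {s : Fin n → Dir d // IsNB s ∧ (∑ i, dirVec (s i)) = x}))
    (fun a b h => by
      have hv := congrArg Subtype.val h
      exact Subtype.ext hv)

end Final
/-- **Domination of the percolation two-point function by the non-backtracking walk
generating function.** -/
theorem tau_le_nbw (d : ℕ) (hd : 1 ≤ d) (p : ℝ) (hp0 : 0 ≤ p)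
    (hp1 : p ≤ 1 / (2 * (d : ℝ) - 1)) (x : Vertex d) :
    tauE d p x ≤ ∑' n : ℕ, (nbw d n x : ℝ≥0∞) * (ENNReal.ofReal p) ^ n := by
  classical
  have hd1 : (1 : ℝ) ≤ 2 * (d : ℝ) - 1 := by
    have : (1 : ℝ) ≤ (d : ℝ) := by exact_mod_cast hd
    linarith
  have hp1' : p ≤ 1 := hp1.trans ((div_le_one (by linarith)).mpr hd1)
  have hcov := conn_subset_cyl (d := d) x
  calc tauE d p x ≤ percMeasure d p (⋃ q : Σ n, GoodT d n x, cylOf q) :=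
        measure_mono hcov
    _ ≤ ∑' q : Σ n, GoodT d n x, percMeasure d p (cylOf q) := measure_iUnion_le _
    _ = ∑' n : ℕ, ∑' s : GoodT d n x, percMeasure d p (cylOf ⟨n, s⟩) :=
        ENNReal.tsum_sigma' _
    _ = ∑' n : ℕ, ∑' _s : GoodT d n x, ENNReal.ofReal p ^ n := by
        congr 1
        funext n
        congr 1
        funext s
        have := perc_cyl d hp0 hp1' (bondsOf (0 : Vertex d) (List.ofFn s.1)) s.2.2.2
        rw [cylOf, this, bondsOf_length, List.length_ofFn]
    _ = ∑' n : ℕ, (Nat.card (GoodT d n x) : ℝ≥0∞) * ENNReal.ofReal p ^ n := by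
        congr 1
        funext n
        letI : Fintype (GoodT d n x) := Fintype.ofFinite _
        rw [tsum_fintype, Finset.sum_const, Finset.card_univ, Nat.card_eq_fintype_card,
          nsmul_eq_mul]
    _ ≤ ∑' n : ℕ, (nbw d n x : ℝ≥0∞) * ENNReal.ofReal p ^ n :=
        ENNReal.tsum_le_tsum fun n =>
          mul_le_mul_left (Nat.cast_le.mpr (card_goodT_le d n x)) _

end NoBLE
end

section
/- Overcounting bound for the N = 0 NoBLE coefficient (from the proof of Lemma 4.1): for every d ≥ 2, every p ∈ [0,1] and every x ∈ ℤ^d with x ≠ 0, Σ_{κ ∈ {±1,…,±d}} ℙ_p({0 ⇔ x} ∩ {x − e_κ ∉ C̃^{{x, x−e_κ}}(x)}) ≤ (2d − 2)·ℙ_p(0 ⇔ x). -/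
open MeasureTheory Filter
open scoped ENNReal

namespace NoBLE

/-- The (ordered) pairs `(a,b)` and `(u,v)` span the same undirected edge. -/
def SameEdge {d : ℕ} (a b u v : Vertex d) : Prop := (a = u ∧ b = v) ∨ (a = v ∧ b = u)

/-- `γ` is an `n`-step walk of occupied bonds from `x` to `y`. -/
def OccWalk {d n : ℕ} (ω : Config d) (γ : Fin (n + 1) → Vertex d) (x y : Vertex d) : Prop :=
  γ 0 = x ∧ γ (Fin.last n) = y ∧ ∀ i : Fin n, Occ ω (γ i.castSucc) (γ i.succ)

/-- The bonds used by the walk `γ` are pairwise distinct. -/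
def DistinctBonds {d n : ℕ} (γ : Fin (n + 1) → Vertex d) : Prop :=
  ∀ i j : Fin n, i ≠ j → ¬ SameEdge (γ i.castSucc) (γ i.succ) (γ j.castSucc) (γ j.succ)

/-- Occupation of the edge `{a,c}` avoiding the undirected edge `{u,v}`. -/
def OccAvoid {d : ℕ} (ω : Config d) (u v a c : Vertex d) : Prop :=
  Occ ω a c ∧ ¬ SameEdge a c u v

/-- `C̃^{{u,v}}(x)`: the set of vertices connected to `x` in the configuration in which
the bond `{u,v}` is made vacant. -/
def tildeC {d : ℕ} (ω : Config d) (u v x : Vertex d) : Set (Vertex d) :=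
  {y | Relation.ReflTransGen (OccAvoid ω u v) x y}

/-- `x ⇔ y`: doubly connected, i.e. there are two bond-disjoint paths of occupied bonds
from `x` to `y` (by convention, `x ⇔ x`). -/
def DConn {d : ℕ} (ω : Config d) (x y : Vertex d) : Prop :=
  x = y ∨ ∃ (n m : ℕ) (γ : Fin (n + 1) → Vertex d) (δ : Fin (m + 1) → Vertex d),
    OccWalk ω γ x y ∧ OccWalk ω δ x y ∧
      ∀ (i : Fin n) (j : Fin m),
        ¬ SameEdge (γ i.castSucc) (γ i.succ) (δ j.castSucc) (δ j.succ)



lemma occ_symm {d : ℕ} {ω : Config d} {a c : Vertex d} (h : Occ ω a c) : Occ ω c a := by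
  rcases h with ⟨i, h1, h2⟩ | ⟨i, h1, h2⟩
  · exact Or.inr ⟨i, h1, h2⟩
  · exact Or.inl ⟨i, h1, h2⟩

lemma occAvoid_symm {d : ℕ} {ω : Config d} {u v a c : Vertex d}
    (h : OccAvoid ω u v a c) : OccAvoid ω u v c a := by
  refine ⟨occ_symm h.1, ?_⟩
  have := h.2
  simp only [SameEdge] at *
  tauto

lemma rtg_symm {V : Type*} {r : V → V → Prop} (hr : ∀ a b, r a b → r b a) {a b : V}
    (h : Relation.ReflTransGen r a b) : Relation.ReflTransGen r b a := by
  induction h with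
  | refl => exact Relation.ReflTransGen.refl
  | tail _ hstep ih => exact Relation.ReflTransGen.head (hr _ _ hstep) ih

lemma walk_rtg {d n : ℕ} {ω : Config d} {γ : Fin (n + 1) → Vertex d} {s t u v : Vertex d}
    (hw : OccWalk ω γ s t)
    (hav : ∀ k : Fin n, ¬ SameEdge (γ k.castSucc) (γ k.succ) u v) :
    Relation.ReflTransGen (OccAvoid ω u v) s t := by
  have key : ∀ K : ℕ, ∀ h : K ≤ n,
      Relation.ReflTransGen (OccAvoid ω u v) s (γ ⟨K, Nat.lt_succ_of_le h⟩) := by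
    intro K
    induction K with
    | zero =>
      intro h
      have : (⟨0, Nat.lt_succ_of_le h⟩ : Fin (n + 1)) = 0 := rfl
      rw [this, hw.1]
    | succ K ih =>
      intro h
      have hK : K < n := h
      refine (ih hK.le).tail ?_
      have h1 : Occ ω (γ (Fin.castSucc ⟨K, hK⟩)) (γ (Fin.succ ⟨K, hK⟩)) := hw.2.2 ⟨K, hK⟩
      have h2 := hav ⟨K, hK⟩
      have e1 : Fin.castSucc (⟨K, hK⟩ : Fin n) = ⟨K, Nat.lt_succ_of_le hK.le⟩ := rfl
      have e2 : Fin.succ (⟨K, hK⟩ : Fin n) = ⟨K + 1, Nat.lt_succ_of_le h⟩ := rfl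
      rw [e1, e2] at h1 h2
      exact ⟨h1, h2⟩
  have := key n le_rfl
  have e : (⟨n, Nat.lt_succ_of_le le_rfl⟩ : Fin (n + 1)) = Fin.last n := rfl
  rwa [e, hw.2.1] at this

lemma walk_extract {d n : ℕ} {ω : Config d} {γ : Fin (n + 1) → Vertex d} {x : Vertex d}
    (hw : OccWalk ω γ 0 x) (hx : x ≠ 0) :
    ∃ j : Fin n, γ j.succ = x ∧ Occ ω (γ j.castSucc) x ∧
      Relation.ReflTransGen (OccAvoid ω x (γ j.castSucc)) 0 (γ j.castSucc) := by
  classical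
  -- minimal index where γ = x
  obtain ⟨i, hiF, hmin⟩ := (Finset.univ.filter fun k : Fin (n + 1) => γ k = x).exists_min_image
    id ⟨Fin.last n, by simp [hw.2.1]⟩
  simp only [Finset.mem_filter, Finset.mem_univ, true_and] at hiF
  have hmin' : ∀ k : Fin (n + 1), k < i → γ k ≠ x := by
    intro k hk hγk
    have := hmin k (by simp [hγk])
    simp only [id] at this
    exact absurd (lt_of_lt_of_le hk this) (lt_irrefl _)
  have hi0 : (i : ℕ) ≠ 0 := by
    intro h0
    have : i = 0 := Fin.ext h0
    rw [this, hw.1] at hiF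
    exact hx hiF.symm
  have hjlt : (i : ℕ) - 1 < n := by
    have := i.isLt; omega
  set j : Fin n := ⟨(i : ℕ) - 1, hjlt⟩ with hj
  have hjs : j.succ = i := by
    apply Fin.ext
    simp [hj, Fin.val_succ]
    omega
  have hjc : (j.castSucc : ℕ) = (i : ℕ) - 1 := rfl
  have hjcx : γ j.succ = x := by rw [hjs]; exact hiF
  have hocc : Occ ω (γ j.castSucc) x := by
    have := hw.2.2 j
    rwa [hjcx] at this
  refine ⟨j, hjcx, hocc, ?_⟩
  -- prefix walk up to j.castSucc
  set a := γ j.castSucc with ha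
  set n' : ℕ := (i : ℕ) - 1 with hn'
  have hlt : ∀ K : ℕ, K ≤ n' → K < n + 1 := by intro K hK; omega
  set γ' : Fin (n' + 1) → Vertex d := fun k => γ ⟨(k : ℕ), hlt k (Nat.lt_succ_iff.mp k.isLt)⟩
    with hγ'
  have hne : ∀ k : Fin (n' + 1), γ' k ≠ x := by
    intro k
    apply hmin'
    have : ((k : ℕ)) < (i : ℕ) := by have := k.isLt; omega
    exact this
  have hw' : OccWalk ω γ' 0 a := by
    refine ⟨?_, ?_, ?_⟩
    · show γ ⟨0, _⟩ = 0
      have : (⟨0, hlt 0 (by omega)⟩ : Fin (n + 1)) = 0 := rfl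
      rw [this, hw.1]
    · show γ ⟨n', _⟩ = a
      rw [ha]
      congr 1
    · intro k
      have hkn : (k : ℕ) < n := by have := k.isLt; omega
      have := hw.2.2 ⟨(k : ℕ), hkn⟩
      have e1 : γ (Fin.castSucc ⟨(k : ℕ), hkn⟩) = γ' k.castSucc := rfl
      have e2 : γ (Fin.succ ⟨(k : ℕ), hkn⟩) = γ' k.succ := rfl
      rwa [e1, e2] at this
  refine walk_rtg hw' ?_
  intro k hse
  rcases hse with ⟨h1, _⟩ | ⟨_, h2⟩
  · exact hne k.castSucc h1
  · exact hne k.succ h2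

lemma dconn_two_dirs {d : ℕ} {ω : Config d} {x : Vertex d}
    (h : DConn ω 0 x) (hx : x ≠ 0) :
    ∃ κ₁ κ₂ : Dir d, κ₁ ≠ κ₂ ∧
      x - dirVec κ₁ ∈ tildeC ω x (x - dirVec κ₁) x ∧
      x - dirVec κ₂ ∈ tildeC ω x (x - dirVec κ₂) x := by
  rcases h with h0 | ⟨n, m, γ, δ, hγ, hδ, hcross⟩
  · exact absurd h0.symm hx
  obtain ⟨j₁, hj₁x, hocc₁, hrtg₁⟩ := walk_extract hγ hx
  obtain ⟨j₂, hj₂x, hocc₂, hrtg₂⟩ := walk_extract hδ hx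
  set a := γ j₁.castSucc with ha
  set b := δ j₂.castSucc with hb
  -- directions
  have hdir : ∀ c : Vertex d, Occ ω c x → ∃ κ : Dir d, x - dirVec κ = c := by
    intro c hc
    rcases hc with ⟨i, h1, _⟩ | ⟨i, h1, _⟩
    · exact ⟨(i, true), by simp [dirVec, h1]⟩
    · exact ⟨(i, false), by simp [dirVec, h1, sub_neg_eq_add]⟩
  obtain ⟨κ₁, hκ₁⟩ := hdir a hocc₁
  obtain ⟨κ₂, hκ₂⟩ := hdir b hocc₂
  have hab : ¬ SameEdge a x b x := by
    have := hcross j₁ j₂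
    rwa [hj₁x, hj₂x] at this
  have habne : a ≠ b := by
    intro h; exact hab (Or.inl ⟨h, rfl⟩)
  refine ⟨κ₁, κ₂, ?_, ?_, ?_⟩
  · intro h; apply habne; rw [← hκ₁, ← hκ₂, h]
  · -- x → 0 via δ avoiding {x,a}, then 0 → a
    rw [hκ₁]
    have havδ : ∀ k : Fin m, ¬ SameEdge (δ k.castSucc) (δ k.succ) x a := by
      intro k hse
      have h1 := hcross j₁ k
      rw [hj₁x] at h1
      apply h1
      rcases hse with ⟨e1, e2⟩ | ⟨e1, e2⟩
      · exact Or.inr ⟨e2.symm, e1.symm⟩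
      · exact Or.inl ⟨e1.symm, e2.symm⟩
    have hx0 : Relation.ReflTransGen (OccAvoid ω x a) x 0 :=
      rtg_symm (fun _ _ => occAvoid_symm) (walk_rtg hδ havδ)
    exact Relation.ReflTransGen.trans hx0 hrtg₁
  · rw [hκ₂]
    have havγ : ∀ k : Fin n, ¬ SameEdge (γ k.castSucc) (γ k.succ) x b := by
      intro k hse
      have h1 := hcross k j₂
      rw [hj₂x] at h1
      apply h1
      rcases hse with ⟨e1, e2⟩ | ⟨e1, e2⟩
      · exact Or.inr ⟨e1, e2⟩
      · exact Or.inl ⟨e1, e2⟩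
    have hx0 : Relation.ReflTransGen (OccAvoid ω x b) x 0 :=
      rtg_symm (fun _ _ => occAvoid_symm) (walk_rtg hγ havγ)
    exact Relation.ReflTransGen.trans hx0 hrtg₂



lemma measurableSet_occ {d : ℕ} (a c : Vertex d) : MeasurableSet {ω : Config d | Occ ω a c} := by
  have : {ω : Config d | Occ ω a c} =
      (⋃ i : Fin d, ⋃ _ : c = a + basis i, {ω : Config d | ω (a, i) = true}) ∪
      (⋃ i : Fin d, ⋃ _ : a = c + basis i, {ω : Config d | ω (c, i) = true}) := by
    ext ω
    simp only [Occ, Set.mem_union, Set.mem_iUnion, Set.mem_setOf_eq, exists_prop]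
  rw [this]
  have hcyl : ∀ b : Bond d, MeasurableSet {ω : Config d | ω b = true} := by
    intro b
    have : {ω : Config d | ω b = true} = (fun ω : Config d => ω b) ⁻¹' {true} := by
      ext ω; simp
    rw [this]
    exact measurable_pi_apply b (MeasurableSet.singleton true)
  exact (MeasurableSet.iUnion fun i => MeasurableSet.iUnion fun _ => hcyl _).union
    (MeasurableSet.iUnion fun i => MeasurableSet.iUnion fun _ => hcyl _)

lemma measurableSet_occAvoid {d : ℕ} (u v a c : Vertex d) :
    MeasurableSet {ω : Config d | OccAvoid ω u v a c} := by
  by_cases h : SameEdge a c u v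
  · have : {ω : Config d | OccAvoid ω u v a c} = ∅ := by
      ext ω; simp [OccAvoid, h]
    rw [this]; exact MeasurableSet.empty
  · have : {ω : Config d | OccAvoid ω u v a c} = {ω : Config d | Occ ω a c} := by
      ext ω; simp [OccAvoid, h]
    rw [this]; exact measurableSet_occ a c

lemma measurableSet_chain {d : ℕ} {R : Config d → Vertex d → Vertex d → Prop}
    (hR : ∀ a c, MeasurableSet {ω : Config d | R ω a c}) :
    ∀ (l : List (Vertex d)) (a : Vertex d), MeasurableSet {ω : Config d | List.Chain (R ω) a l}
  | [], a => by simp [List.Chain]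
  | c :: l, a => by
    have : {ω : Config d | List.Chain (R ω) a (c :: l)} =
        {ω : Config d | R ω a c} ∩ {ω : Config d | List.Chain (R ω) c l} := by
      ext ω; simp [List.Chain, List.isChain_cons_cons]
    rw [this]
    exact (hR a c).inter (measurableSet_chain hR l c)

lemma measurableSet_rtg {d : ℕ} {R : Config d → Vertex d → Vertex d → Prop}
    (hR : ∀ a c, MeasurableSet {ω : Config d | R ω a c}) (x y : Vertex d) :
    MeasurableSet {ω : Config d | Relation.ReflTransGen (R ω) x y} := by
  have : {ω : Config d | Relation.ReflTransGen (R ω) x y} =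
      ⋃ l : List (Vertex d), ⋃ _ : (x :: l).getLast (List.cons_ne_nil _ _) = y,
        {ω : Config d | List.Chain (R ω) x l} := by
    ext ω
    simp only [Set.mem_iUnion, Set.mem_setOf_eq]
    constructor
    · intro h
      obtain ⟨l, hc, hl⟩ := List.exists_isChain_cons_of_relationReflTransGen h
      exact ⟨l, hl, hc⟩
    · rintro ⟨l, hl, hc⟩
      exact List.relationReflTransGen_of_exists_isChain_cons l hc hl
  rw [this]
  exact MeasurableSet.iUnion fun l => MeasurableSet.iUnion fun _ => measurableSet_chain hR l x

lemma measurableSet_notTildeC {d : ℕ} (u v x y : Vertex d) :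
    MeasurableSet {ω : Config d | y ∉ tildeC ω u v x} := by
  have : {ω : Config d | y ∉ tildeC ω u v x} =
      {ω : Config d | Relation.ReflTransGen (OccAvoid ω u v) x y}ᶜ := rfl
  rw [this]
  exact (measurableSet_rtg (fun a c => measurableSet_occAvoid u v a c) x y).compl

lemma measurableSet_occWalk {d n : ℕ} (γ : Fin (n + 1) → Vertex d) (x y : Vertex d) :
    MeasurableSet {ω : Config d | OccWalk ω γ x y} := by
  have : {ω : Config d | OccWalk ω γ x y} =
      {_ω : Config d | γ 0 = x} ∩ {_ω : Config d | γ (Fin.last n) = y} ∩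
        ⋂ i : Fin n, {ω : Config d | Occ ω (γ i.castSucc) (γ i.succ)} := by
    ext ω; simp only [OccWalk, Set.mem_inter_iff, Set.mem_iInter, Set.mem_setOf_eq]; tauto
  rw [this]
  exact ((MeasurableSet.const _).inter (MeasurableSet.const _)).inter
    (MeasurableSet.iInter fun i => measurableSet_occ _ _)

lemma measurableSet_dconn {d : ℕ} (x y : Vertex d) :
    MeasurableSet {ω : Config d | DConn ω x y} := by
  have : {ω : Config d | DConn ω x y} =
      {_ω : Config d | x = y} ∪
      ⋃ n : ℕ, ⋃ m : ℕ, ⋃ γ : Fin (n + 1) → Vertex d, ⋃ δ : Fin (m + 1) → Vertex d,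
        ⋃ _ : (∀ (i : Fin n) (j : Fin m),
            ¬ SameEdge (γ i.castSucc) (γ i.succ) (δ j.castSucc) (δ j.succ)),
          ({ω : Config d | OccWalk ω γ x y} ∩ {ω : Config d | OccWalk ω δ x y}) := by
    ext ω
    simp only [DConn, Set.mem_union, Set.mem_iUnion, Set.mem_setOf_eq, Set.mem_inter_iff,
      exists_prop]
    tauto
  rw [this]
  exact (MeasurableSet.const _).union <| MeasurableSet.iUnion fun n =>
    MeasurableSet.iUnion fun m => MeasurableSet.iUnion fun γ => MeasurableSet.iUnion fun δ =>
    MeasurableSet.iUnion fun _ => (measurableSet_occWalk γ x y).inter (measurableSet_occWalk δ x y)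


lemma sum_meas_le (d : ℕ) (hd : 2 ≤ d) {Ω : Type*} [MeasurableSpace Ω] (μ : Measure Ω)
    (A : Set Ω) (B : Dir d → Set Ω)
    (hA : MeasurableSet A) (hB : ∀ κ, MeasurableSet (B κ))
    (htwo : ∀ ω ∈ A, ∃ κ₁ κ₂, κ₁ ≠ κ₂ ∧ ω ∉ B κ₁ ∧ ω ∉ B κ₂) :
    (∑ κ : Dir d, μ (A ∩ B κ)) ≤ (2 * (d : ℝ≥0∞) - 2) * μ A := by
  classical
  have hAB : ∀ κ : Dir d, MeasurableSet (A ∩ B κ) := fun κ => hA.inter (hB κ)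
  have h1 : ∀ κ : Dir d, μ (A ∩ B κ)
      = ∫⁻ ω, (A ∩ B κ).indicator (fun _ => (1 : ℝ≥0∞)) ω ∂μ := by
    intro κ
    rw [lintegral_indicator_const (hAB κ), one_mul]
  calc (∑ κ : Dir d, μ (A ∩ B κ))
      = ∫⁻ ω, ∑ κ : Dir d, (A ∩ B κ).indicator (fun _ => (1 : ℝ≥0∞)) ω ∂μ := by
        rw [lintegral_finset_sum _
          (fun κ _ => (measurable_const.indicator (hAB κ)))]
        simp_rw [h1]
    _ ≤ ∫⁻ ω, A.indicator (fun _ => (2 * (d : ℝ≥0∞) - 2)) ω ∂μ := by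
        refine lintegral_mono fun ω => ?_
        by_cases hω : ω ∈ A
        · obtain ⟨κ₁, κ₂, hne, hk1, hk2⟩ := htwo ω hω
          set T : Finset (Dir d) := Finset.univ.filter (fun κ => ω ∈ A ∩ B κ) with hT
          have hsum : (∑ κ : Dir d, (A ∩ B κ).indicator (fun _ => (1 : ℝ≥0∞)) ω)
              = (T.card : ℝ≥0∞) := by
            rw [hT, Finset.card_filter]
            push_cast
            refine Finset.sum_congr rfl fun κ _ => ?_
            by_cases h : ω ∈ A ∩ B κ <;> simp [Set.indicator_apply, h]
          have hsub : T ⊆ (Finset.univ.erase κ₁).erase κ₂ := by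
            intro κ hκ
            rw [hT, Finset.mem_filter] at hκ
            have hκB : ω ∈ B κ := hκ.2.2
            refine Finset.mem_erase.2 ⟨?_, Finset.mem_erase.2 ⟨?_, Finset.mem_univ _⟩⟩
            · rintro rfl; exact hk2 hκB
            · rintro rfl; exact hk1 hκB
          have hcard : T.card + 2 ≤ 2 * d := by
            have h2 : ((Finset.univ.erase κ₁).erase κ₂).card
                = Fintype.card (Dir d) - 2 := by
              rw [Finset.card_erase_of_mem (Finset.mem_erase.2 ⟨hne.symm, Finset.mem_univ _⟩),
                Finset.card_erase_of_mem (Finset.mem_univ _), Finset.card_univ]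
              omega
            have h3 := Finset.card_le_card hsub
            have h4 : Fintype.card (Dir d) = 2 * d := by
              simp [Fintype.card_prod, mul_comm]
            omega
          rw [hsum, Set.indicator_of_mem hω]
          refine ENNReal.le_sub_of_add_le_right (by norm_num) ?_
          calc (T.card : ℝ≥0∞) + 2 = ((T.card + 2 : ℕ) : ℝ≥0∞) := by push_cast; ring
            _ ≤ ((2 * d : ℕ) : ℝ≥0∞) := by exact_mod_cast hcard
            _ = 2 * (d : ℝ≥0∞) := by push_cast; ring
        · rw [Set.indicator_of_notMem hω]
          refine le_of_eq (Finset.sum_eq_zero fun κ _ => ?_)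
          exact Set.indicator_of_notMem (fun h => hω h.1) _
    _ = (2 * (d : ℝ≥0∞) - 2) * μ A := lintegral_indicator_const hA _

/-- **Overcounting bound for the `N = 0` NoBLE coefficient** (proof of Lemma 4.1). -/
theorem overcounting_bound (d : ℕ) (hd : 2 ≤ d) (p : ℝ) (hp0 : 0 ≤ p) (hp1 : p ≤ 1)
    (x : Vertex d) (hx : x ≠ 0) :
    (∑ κ : Dir d, percMeasure d p
        ({ω | DConn ω 0 x} ∩ {ω | x - dirVec κ ∉ tildeC ω x (x - dirVec κ) x})) ≤
      (2 * (d : ℝ≥0∞) - 2) * percMeasure d p {ω | DConn ω 0 x} := by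
  refine sum_meas_le d hd (percMeasure d p) {ω | DConn ω 0 x}
    (fun κ => {ω | x - dirVec κ ∉ tildeC ω x (x - dirVec κ) x})
    (measurableSet_dconn 0 x)
    (fun κ => measurableSet_notTildeC x (x - dirVec κ) x (x - dirVec κ))
    (fun ω hω => ?_)
  obtain ⟨κ₁, κ₂, hne, h1, h2⟩ := dconn_two_dirs hω hx
  exact ⟨κ₁, κ₂, hne, fun h => h h1, fun h => h h2⟩


end NoBLE
end
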